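/- For A ≥ B ≥ C ≥ 1 and m = ⌊(A+B+C-4)/2⌋, the multiplication maps U_r : R_r → R_{r+1} over ℤ are injective for all r ≤ m if and only if U_m is injective. -/

import Mathlib

open Matrix Function

/-- Monomials `x^i y^j z^k` of degree `s` nonzero in `ℤ[x,y,z]/(x^A,y^B,z^C)`. -/
def Mon (A B C s : ℕ) : Type :=
  {v : Fin A × Fin B × Fin C // (v.1 : ℕ) + (v.2.1 : ℕ) + (v.2.2 : ℕ) = s}

instance (A B C s : ℕ) : Fintype (Mon A B C s) := by unfold Mon; infer_instance
instance (A B C s : ℕ) : DecidableEq (Mon A B C s) := by unfold Mon; infer_instance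

/-- The matrix of multiplication by `x+y+z` in the monomial bases. -/
def Umat (A B C r : ℕ) : Matrix (Mon A B C (r+1)) (Mon A B C r) ℤ :=
  Matrix.of fun w v =>
    if (v.1.1 : ℕ) ≤ (w.1.1 : ℕ) ∧ (v.1.2.1 : ℕ) ≤ (w.1.2.1 : ℕ) ∧
        (v.1.2.2 : ℕ) ≤ (w.1.2.2 : ℕ) then (1 : ℤ) else 0

def UQ (A B C r : ℕ) : Matrix (Mon A B C (r+1)) (Mon A B C r) ℚ :=
  (Umat A B C r).map (Int.cast : ℤ → ℚ)

lemma UQ_apply (A B C r : ℕ) (w : Mon A B C (r+1)) (v : Mon A B C r) :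
    UQ A B C r w v =
    if (v.1.1 : ℕ) ≤ (w.1.1 : ℕ) ∧ (v.1.2.1 : ℕ) ≤ (w.1.2.1 : ℕ) ∧
        (v.1.2.2 : ℕ) ≤ (w.1.2.2 : ℕ) then (1 : ℚ) else 0 := by
  simp [UQ, Umat, Matrix.map_apply, apply_ite (Int.cast : ℤ → ℚ)]

def compFun {A B C s t : ℕ} (h : s + t + 3 = A + B + C) (v : Mon A B C s) : Mon A B C t :=
  ⟨(⟨A - 1 - (v.1.1 : ℕ), by have := v.1.1.isLt; omega⟩,
    ⟨B - 1 - (v.1.2.1 : ℕ), by have := v.1.2.1.isLt; omega⟩,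
    ⟨C - 1 - (v.1.2.2 : ℕ), by have := v.1.2.2.isLt; omega⟩), by
    have h1 := v.1.1.isLt; have h2 := v.1.2.1.isLt; have h3 := v.1.2.2.isLt
    have hv := v.2
    simp only [Fin.val_mk]
    omega⟩

def compEquiv {A B C s t : ℕ} (h : s + t + 3 = A + B + C) : Mon A B C s ≃ Mon A B C t where
  toFun := compFun h
  invFun := compFun (by omega)
  left_inv v := by
    have h1 := v.1.1.isLt; have h2 := v.1.2.1.isLt; have h3 := v.1.2.2.isLt
    apply Subtype.ext
    simp only [compFun]
    refine Prod.ext (Fin.ext ?_) (Prod.ext (Fin.ext ?_) (Fin.ext ?_)) <;>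
      simp only [Fin.val_mk] <;> omega
  right_inv v := by
    have h1 := v.1.1.isLt; have h2 := v.1.2.1.isLt; have h3 := v.1.2.2.isLt
    apply Subtype.ext
    simp only [compFun]
    refine Prod.ext (Fin.ext ?_) (Prod.ext (Fin.ext ?_) (Fin.ext ?_)) <;>
      simp only [Fin.val_mk] <;> omega

lemma UQ_transpose {A B C r t : ℕ} (h1 : r + (t + 1) + 3 = A + B + C)
    (h2 : (r + 1) + t + 3 = A + B + C) :
    (UQ A B C r)ᵀ = (UQ A B C t).submatrix (compEquiv h1) (compEquiv h2) := by
  ext v w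
  rw [Matrix.transpose_apply, Matrix.submatrix_apply, UQ_apply, UQ_apply]
  have a1 := v.1.1.isLt; have a2 := v.1.2.1.isLt; have a3 := v.1.2.2.isLt
  have b1 := w.1.1.isLt; have b2 := w.1.2.1.isLt; have b3 := w.1.2.2.isLt
  refine if_congr ?_ rfl rfl
  have e1 : ((compEquiv h2 w).1.1 : ℕ) = A - 1 - (w.1.1 : ℕ) := rfl
  have e2 : ((compEquiv h2 w).1.2.1 : ℕ) = B - 1 - (w.1.2.1 : ℕ) := rfl
  have e3 : ((compEquiv h2 w).1.2.2 : ℕ) = C - 1 - (w.1.2.2 : ℕ) := rfl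
  have e4 : ((compEquiv h1 v).1.1 : ℕ) = A - 1 - (v.1.1 : ℕ) := rfl
  have e5 : ((compEquiv h1 v).1.2.1 : ℕ) = B - 1 - (v.1.2.1 : ℕ) := rfl
  have e6 : ((compEquiv h1 v).1.2.2 : ℕ) = C - 1 - (v.1.2.2 : ℕ) := rfl
  omega

/-- Matrix of multiplication by the monomial `x^a y^b z^c` (with `a+b+c = 1`). -/
def Emat (A B C s a b c : ℕ) : Matrix (Mon A B C (s + 1)) (Mon A B C s) ℚ :=
  Matrix.of fun w v =>
    if (w.1.1 : ℕ) = (v.1.1 : ℕ) + a ∧ (w.1.2.1 : ℕ) = (v.1.2.1 : ℕ) + b ∧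
        (w.1.2.2 : ℕ) = (v.1.2.2 : ℕ) + c then (1 : ℚ) else 0

lemma Emat_apply (A B C s a b c : ℕ) (w : Mon A B C (s + 1)) (v : Mon A B C s) :
    Emat A B C s a b c w v =
    if (w.1.1 : ℕ) = (v.1.1 : ℕ) + a ∧ (w.1.2.1 : ℕ) = (v.1.2.1 : ℕ) + b ∧
        (w.1.2.2 : ℕ) = (v.1.2.2 : ℕ) + c then (1 : ℚ) else 0 := rfl

lemma EU_entry {A B C s a b c : ℕ} (habc : a + b + c = 1)
    (w : Mon A B C (s + 1 + 1)) (v : Mon A B C s) :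
    (Emat A B C (s + 1) a b c * UQ A B C s) w v =
    if (v.1.1 : ℕ) + a ≤ (w.1.1 : ℕ) ∧ (v.1.2.1 : ℕ) + b ≤ (w.1.2.1 : ℕ) ∧
        (v.1.2.2 : ℕ) + c ≤ (w.1.2.2 : ℕ) then (1 : ℚ) else 0 := by
  rw [Matrix.mul_apply]
  obtain ⟨⟨⟨wi, hwi⟩, ⟨wj, hwj⟩, ⟨wk, hwk⟩⟩, hw⟩ := w
  obtain ⟨⟨⟨vi, hvi⟩, ⟨vj, hvj⟩, ⟨vk, hvk⟩⟩, hv⟩ := v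
  simp only [Fin.val_mk] at hw hv
  simp only [Fin.val_mk]
  by_cases hcond : vi + a ≤ wi ∧ vj + b ≤ wj ∧ vk + c ≤ wk
  · rw [if_pos hcond]
    set v' : Mon A B C (s + 1) :=
      ⟨(⟨wi - a, by omega⟩, ⟨wj - b, by omega⟩, ⟨wk - c, by omega⟩), by
        simp only [Fin.val_mk]; omega⟩ with hv'
    rw [Finset.sum_eq_single v']
    · erw [Emat_apply, UQ_apply]
      simp only [Matrix.of_apply, hv', Fin.val_mk]
      rw [if_pos (show wi = wi - a + a ∧ wj = wj - b + b ∧ wk = wk - c + c by omega),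
        if_pos (show vi ≤ wi - a ∧ vj ≤ wj - b ∧ vk ≤ wk - c by omega), one_mul]
    · intro u _ hu
      obtain ⟨⟨⟨ui, hui⟩, ⟨uj, huj⟩, ⟨uk, huk⟩⟩, hu2⟩ := u
      simp only [Fin.val_mk] at hu2
      erw [Emat_apply]
      simp only [Matrix.of_apply, Fin.val_mk]
      rw [if_neg, zero_mul]
      intro hcond2
      apply hu
      rw [hv']
      apply Subtype.ext
      refine Prod.ext (Fin.ext ?_) (Prod.ext (Fin.ext ?_) (Fin.ext ?_)) <;>
        simp only [Fin.val_mk] <;> omega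
    · intro h; exact absurd (Finset.mem_univ v') h
  · rw [if_neg hcond]
    apply Finset.sum_eq_zero
    intro u _
    obtain ⟨⟨⟨ui, hui⟩, ⟨uj, huj⟩, ⟨uk, huk⟩⟩, hu2⟩ := u
    simp only [Fin.val_mk] at hu2
    erw [Emat_apply, UQ_apply]
    simp only [Matrix.of_apply, Fin.val_mk]
    by_cases h1 : wi = ui + a ∧ wj = uj + b ∧ wk = uk + c
    · rw [if_pos h1, if_neg (show ¬(vi ≤ ui ∧ vj ≤ uj ∧ vk ≤ uk) by omega), mul_zero]
    · rw [if_neg h1, zero_mul]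

lemma UE_entry {A B C s a b c : ℕ} (habc : a + b + c = 1)
    (w : Mon A B C (s + 1 + 1)) (v : Mon A B C s) :
    (UQ A B C (s + 1) * Emat A B C s a b c) w v =
    if (v.1.1 : ℕ) + a ≤ (w.1.1 : ℕ) ∧ (v.1.2.1 : ℕ) + b ≤ (w.1.2.1 : ℕ) ∧
        (v.1.2.2 : ℕ) + c ≤ (w.1.2.2 : ℕ) then (1 : ℚ) else 0 := by
  rw [Matrix.mul_apply]
  obtain ⟨⟨⟨wi, hwi⟩, ⟨wj, hwj⟩, ⟨wk, hwk⟩⟩, hw⟩ := w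
  obtain ⟨⟨⟨vi, hvi⟩, ⟨vj, hvj⟩, ⟨vk, hvk⟩⟩, hv⟩ := v
  simp only [Fin.val_mk] at hw hv
  simp only [Fin.val_mk]
  by_cases hcond : vi + a ≤ wi ∧ vj + b ≤ wj ∧ vk + c ≤ wk
  · rw [if_pos hcond]
    set v' : Mon A B C (s + 1) :=
      ⟨(⟨vi + a, by omega⟩, ⟨vj + b, by omega⟩, ⟨vk + c, by omega⟩), by
        simp only [Fin.val_mk]; omega⟩ with hv'
    rw [Finset.sum_eq_single v']
    · erw [Emat_apply, UQ_apply]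
      simp only [Matrix.of_apply, hv', Fin.val_mk]
      rw [if_pos (show vi + a ≤ wi ∧ vj + b ≤ wj ∧ vk + c ≤ wk from hcond)]
      simp
    · intro u _ hu
      obtain ⟨⟨⟨ui, hui⟩, ⟨uj, huj⟩, ⟨uk, huk⟩⟩, hu2⟩ := u
      simp only [Fin.val_mk] at hu2
      erw [Emat_apply]
      simp only [Matrix.of_apply, Fin.val_mk]
      rw [if_neg, mul_zero]
      intro hcond2
      apply hu
      rw [hv']
      apply Subtype.ext
      refine Prod.ext (Fin.ext ?_) (Prod.ext (Fin.ext ?_) (Fin.ext ?_)) <;>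
        simp only [Fin.val_mk] <;> omega
    · intro h; exact absurd (Finset.mem_univ v') h
  · rw [if_neg hcond]
    apply Finset.sum_eq_zero
    intro u _
    obtain ⟨⟨⟨ui, hui⟩, ⟨uj, huj⟩, ⟨uk, huk⟩⟩, hu2⟩ := u
    simp only [Fin.val_mk] at hu2
    erw [Emat_apply, UQ_apply]
    simp only [Matrix.of_apply, Fin.val_mk]
    by_cases h1 : ui = vi + a ∧ uj = vj + b ∧ uk = vk + c
    · rw [if_pos h1, if_neg (show ¬(ui ≤ wi ∧ uj ≤ wj ∧ uk ≤ wk) by omega), zero_mul]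
    · rw [if_neg h1, mul_zero]

lemma EU_eq_UE {A B C s a b c : ℕ} (habc : a + b + c = 1) :
    Emat A B C (s + 1) a b c * UQ A B C s = UQ A B C (s + 1) * Emat A B C s a b c := by
  ext w v
  rw [EU_entry habc, UE_entry habc]

lemma surj_step {A B C s : ℕ} (h : Surjective (UQ A B C s).mulVecLin) :
    Surjective (UQ A B C (s + 1)).mulVecLin := by
  have key : ∀ w : Mon A B C (s + 1 + 1),
      ∃ u, (UQ A B C (s + 1)).mulVecLin u = Pi.single w 1 := by
    intro w
    obtain ⟨a, b, c, habc, ha, hb, hc⟩ :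
        ∃ a b c : ℕ, a + b + c = 1 ∧ a ≤ (w.1.1 : ℕ) ∧ b ≤ (w.1.2.1 : ℕ) ∧
          c ≤ (w.1.2.2 : ℕ) := by
      have hw := w.2
      by_cases h1 : 1 ≤ (w.1.1 : ℕ)
      · exact ⟨1, 0, 0, by omega, by omega, by omega, by omega⟩
      by_cases h2 : 1 ≤ (w.1.2.1 : ℕ)
      · exact ⟨0, 1, 0, by omega, by omega, by omega, by omega⟩
      · exact ⟨0, 0, 1, by omega, by omega, by omega, by omega⟩
    have b1 := w.1.1.isLt; have b2 := w.1.2.1.isLt; have b3 := w.1.2.2.isLt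
    have hw := w.2
    set w' : Mon A B C (s + 1) :=
      ⟨(⟨(w.1.1 : ℕ) - a, by omega⟩, ⟨(w.1.2.1 : ℕ) - b, by omega⟩,
        ⟨(w.1.2.2 : ℕ) - c, by omega⟩), by simp only [Fin.val_mk]; omega⟩ with hw'
    obtain ⟨u₀, hu₀⟩ := h (Pi.single w' 1)
    refine ⟨(Emat A B C s a b c).mulVec u₀, ?_⟩
    have step1 : (UQ A B C (s + 1)).mulVecLin ((Emat A B C s a b c).mulVec u₀)
        = (UQ A B C (s + 1) * Emat A B C s a b c).mulVec u₀ := by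
      simp [Matrix.mulVecLin_apply, Matrix.mulVec_mulVec]
    rw [step1, ← EU_eq_UE habc, ← Matrix.mulVec_mulVec]
    have hu₀' : (UQ A B C s).mulVec u₀ = Pi.single w' 1 := hu₀
    rw [hu₀', Matrix.mulVec_single_one]
    funext w₂
    have c1 := w₂.1.1.isLt; have c2 := w₂.1.2.1.isLt; have c3 := w₂.1.2.2.isLt
    rw [Matrix.col_apply, Emat_apply]
    simp only [Matrix.of_apply, hw', Fin.val_mk]
    by_cases hww : w₂ = w
    · subst hww
      rw [if_pos (by omega), Pi.single_eq_same]
    · rw [if_neg, Pi.single_eq_of_ne hww]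
      intro hcond
      apply hww
      apply Subtype.ext
      refine Prod.ext (Fin.ext ?_) (Prod.ext (Fin.ext ?_) (Fin.ext ?_)) <;> omega
  intro y
  choose u hu using key
  refine ⟨∑ w, y w • u w, ?_⟩
  rw [map_sum]
  simp_rw [_root_.map_smul, hu, ← Pi.single_smul, smul_eq_mul, mul_one, Finset.univ_sum_single]

lemma surj_submatrix {l m n o : Type*} [Fintype l] [Fintype m] [Fintype n] [Fintype o]
    (M : Matrix m n ℚ) (e₁ : l ≃ m) (e₂ : o ≃ n) :
    Surjective (M.submatrix e₁ e₂).mulVecLin ↔ Surjective M.mulVecLin := by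
  constructor
  · intro hs y
    obtain ⟨x, hx⟩ := hs (y ∘ e₁)
    refine ⟨x ∘ e₂.symm, ?_⟩
    funext i
    have h2 := congrFun hx (e₁.symm i)
    simp only [Matrix.mulVecLin_apply, Matrix.submatrix_mulVec_equiv,
      Function.comp_apply, Equiv.apply_symm_apply] at h2 ⊢
    exact h2
  · intro hs y
    obtain ⟨x, hx⟩ := hs (y ∘ e₁.symm)
    refine ⟨x ∘ e₂, ?_⟩
    funext i
    have h2 := congrFun hx (e₁ i)
    simp only [Matrix.mulVecLin_apply, Matrix.submatrix_mulVec_equiv,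
      Function.comp_apply, Equiv.symm_apply_apply] at h2 ⊢
    rw [show (x ∘ e₂) ∘ e₂.symm = x from by funext j; simp]
    exact h2

lemma inj_iff_surj_transpose {m n : Type*} [Fintype m] [Fintype n] (M : Matrix m n ℚ) :
    Injective M.mulVecLin ↔ Surjective Mᵀ.mulVecLin := by
  rw [← LinearMap.ker_eq_bot, ← LinearMap.range_eq_top]
  have rn := LinearMap.finrank_range_add_finrank_ker M.mulVecLin
  have rt : Mᵀ.rank = M.rank := Matrix.rank_transpose M
  have h1 : (LinearMap.ker M.mulVecLin = ⊥) ↔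
      Module.finrank ℚ (LinearMap.ker M.mulVecLin) = 0 := by
    rw [Submodule.finrank_eq_zero]
  have h2 : (LinearMap.range Mᵀ.mulVecLin = ⊤) ↔
      Module.finrank ℚ (LinearMap.range Mᵀ.mulVecLin) = Module.finrank ℚ (n → ℚ) := by
    constructor
    · rintro h; rw [h]; exact finrank_top _ _
    · intro h; exact Submodule.eq_top_of_finrank_eq h
  rw [h1, h2]
  have h3 : Module.finrank ℚ (LinearMap.range Mᵀ.mulVecLin) = Mᵀ.rank := rfl
  have hM : Module.finrank ℚ (LinearMap.range M.mulVecLin) = M.rank := rfl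
  rw [h3, rt, ← hM]
  simp only [Module.finrank_pi, Fintype.card] at *
  omega

lemma inj_int_iff_rat {m n : Type*} [Fintype m] [Fintype n] (M : Matrix m n ℤ) :
    Injective M.mulVecLin ↔ Injective (M.map (Int.cast : ℤ → ℚ)).mulVecLin := by
  have h1 : Injective M.mulVecLin ↔ LinearIndependent ℤ (fun i ↦ Mᵀ i) := by
    rw [show (M.mulVecLin : (n → ℤ) → (m → ℤ)) = M.mulVec from rfl] at *
    exact Matrix.mulVec_injective_iff
  have h2 : Injective (M.map (Int.cast : ℤ → ℚ)).mulVecLin ↔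
      LinearIndependent ℚ (fun i ↦ (M.map (Int.cast : ℤ → ℚ))ᵀ i) := by
    rw [show ((M.map _).mulVecLin : (n → ℚ) → (m → ℚ)) = (M.map _).mulVec from rfl]
    exact Matrix.mulVec_injective_iff
  rw [h1, h2, ← LinearIndependent.iff_fractionRing ℤ ℚ]
  let f : (m → ℤ) →ₗ[ℤ] (m → ℚ) :=
    { toFun := fun v i => (v i : ℚ)
      map_add' := by intro a b; funext i; simp
      map_smul' := by intro a b; funext i; simp }
  have hf : LinearMap.ker f = ⊥ := by
    rw [LinearMap.ker_eq_bot]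
    intro a b hab
    funext i
    have : ((a i : ℚ)) = (b i : ℚ) := congrFun hab i
    exact_mod_cast this
  have h4 : (fun i ↦ (M.map (Int.cast : ℤ → ℚ))ᵀ i) = f ∘ (fun i ↦ Mᵀ i) := by
    funext j; funext i; rfl
  rw [h4]
  exact (f.linearIndependent_iff hf).symm

/-- For `A ≥ B ≥ C ≥ 1` and `m = ⌊(A+B+C-4)/2⌋`, the multiplication maps
`U_r : R_r → R_{r+1}` over `ℤ` are injective for all `r ≤ m` iff `U_m` is injective. -/
theorem stmt3 (A B C : ℕ) (hC : 1 ≤ C) (hCB : C ≤ B) (hBA : B ≤ A)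
    (m : ℕ) (hm : m = (A + B + C - 4) / 2) :
    (∀ r ≤ m, Function.Injective (Umat A B C r).mulVecLin)
      ↔ Function.Injective (Umat A B C m).mulVecLin := by
  constructor
  · intro h; exact h m le_rfl
  · intro h r hr
    rcases eq_or_lt_of_le hr with h' | hrm
    · exact h' ▸ h
    have h6 : 6 ≤ A + B + C := by omega
    rw [inj_int_iff_rat, show (Umat A B C m).map (Int.cast : ℤ → ℚ) = UQ A B C m from rfl,
      inj_iff_surj_transpose] at h
    rw [inj_int_iff_rat, show (Umat A B C r).map (Int.cast : ℤ → ℚ) = UQ A B C r from rfl,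
      inj_iff_surj_transpose]
    set tm := A + B + C - 4 - m with htm
    set t := A + B + C - 4 - r with ht
    have e1 : m + (tm + 1) + 3 = A + B + C := by omega
    have e2 : (m + 1) + tm + 3 = A + B + C := by omega
    have e3 : r + (t + 1) + 3 = A + B + C := by omega
    have e4 : (r + 1) + t + 3 = A + B + C := by omega
    rw [UQ_transpose e1 e2, surj_submatrix] at h
    rw [UQ_transpose e3 e4, surj_submatrix]
    have hle : tm ≤ t := by omega
    have main : ∀ s, tm ≤ s → Surjective (UQ A B C s).mulVecLin := by
      intro s hs
      induction s, hs using Nat.le_induction with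
      | base => exact h
      | succ n hn ih => exact surj_step ih
    exact main t hle
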